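/- arXiv:cs/0405085 — 9 statements merged into one kernel-verified Lean document; each statement's English description precedes it below -/
import Mathlib

section
/- Let f be a first-order monotone boolean function of arity k and let A ⊆ B ⊆ {1,…,n} with |B \ A| = 1. Then f is invariant under P^n_{A,B} if and only if f is invariant under P^n_{A,B'} for every B' with B ⊆ B' ⊆ {1,…,n}. -/
/-- The flat boolean domain: `⊥`, `tt`, `ff`. -/
abbrev Bb : Type := WithBot Bool

/-- The flat (domain) order on `Bb`: `⊥` below everything, `tt` and `ff` incomparable. -/
def bLE (a b : Bb) : Prop := a = ⊥ ∨ a = b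

/-- Pointwise flat order on tuples. -/
def tupLE {k : ℕ} (x y : Fin k → Bb) : Prop := ∀ i, bLE (x i) (y i)

/-- Strict pointwise flat order on tuples. -/
def tupLT {k : ℕ} (x y : Fin k → Bb) : Prop := tupLE x y ∧ x ≠ y

/-- A first-order boolean function is monotone for the flat order. -/
def FlatMono {k : ℕ} (f : (Fin k → Bb) → Bb) : Prop :=
  ∀ x y, tupLE x y → bLE (f x) (f y)

/-- The presequentiality relation `P^n_{A,B}` (indices `0,…,n-1`). -/
def Preseq (n : ℕ) (A B : Finset ℕ) : Set (Fin n → Bb) :=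
  {d | (∃ i : Fin n, (i : ℕ) ∈ A ∧ d i = ⊥) ∨
       (∀ i j : Fin n, (i : ℕ) ∈ B → (j : ℕ) ∈ B → d i = d j)}

/-- `P^n_{m,m'}`: the presequentiality relation on initial segments. -/
def PreseqSeg (n m m' : ℕ) : Set (Fin n → Bb) :=
  Preseq n (Finset.range m) (Finset.range m')

/-- `f` (arity `k`) is invariant under an `n`-ary relation `R`. -/
def Invariant {k n : ℕ} (f : (Fin k → Bb) → Bb) (R : Set (Fin n → Bb)) : Prop :=
  ∀ x : Fin k → Fin n → Bb, (∀ m, x m ∈ R) →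
    (fun i => f (fun m => x m i)) ∈ R

/-- `π₁(tr f)`: the set of minimal points where `f` is defined. -/
def traceDom {k : ℕ} (f : (Fin k → Bb) → Bb) : Set (Fin k → Bb) :=
  {v | f v ≠ ⊥ ∧ ∀ v', tupLT v' v → f v' = ⊥}

/-- Linear coherence of a set of tuples. -/
def LinCoherent {k : ℕ} (S : Set (Fin k → Bb)) : Prop :=
  ∀ j : Fin k, (∀ v ∈ S, v j ≠ ⊥) → ∀ v ∈ S, ∀ w ∈ S, v j = w j

/-- The coefficient of coherence `cc(f) ∈ ℕ∞`. -/
noncomputable def cc {k : ℕ} (f : (Fin k → Bb) → Bb) : ℕ∞ :=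
  sInf {c : ℕ∞ | ∃ S : Finset (Fin k → Bb),
    ↑S ⊆ traceDom f ∧ 2 ≤ S.card ∧ LinCoherent (↑S : Set (Fin k → Bb)) ∧ c = (S.card : ℕ∞)}

/-- The bivalued coefficient of coherence `bcc(f) ∈ ℕ∞`. -/
noncomputable def bcc {k : ℕ} (f : (Fin k → Bb) → Bb) : ℕ∞ :=
  sInf {c : ℕ∞ | ∃ S : Finset (Fin k → Bb),
    ↑S ⊆ traceDom f ∧ 3 ≤ S.card ∧ LinCoherent (↑S : Set (Fin k → Bb)) ∧
    (∃ v ∈ S, f v = ((true : Bool) : Bb)) ∧ (∃ v ∈ S, f v = ((false : Bool) : Bb)) ∧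
    c = (S.card : ℕ∞)}

/-- M-sequentiality, by induction on the arity. -/
def MSeq : ∀ {k : ℕ}, ((Fin k → Bb) → Bb) → Prop
  | 0, f => ∃ b, ∀ x, f x = b
  | (k+1), f => (∃ b, ∀ x, f x = b) ∨
      ∃ i : Fin (k+1), (∀ x, x i = ⊥ → f x = ⊥) ∧
        ∀ c : Bool, MSeq (fun x : Fin k → Bb => f (i.insertNth (c : Bb) x))

/-- if `|B \ A| = 1`, invariance under `P^n_{A,B}` is equivalent to
invariance under `P^n_{A,B'}` for every larger `B'`. -/
theorem stmt_3 {k n : ℕ} (f : (Fin k → Bb) → Bb) (hf : FlatMono f)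
    (A B : Finset ℕ) (hAB : A ⊆ B) (hBn : ∀ i ∈ B, i < n)
    (hBA : (B \ A).card = 1) :
    Invariant f (Preseq n A B) ↔
      ∀ B' : Finset ℕ, B ⊆ B' → (∀ i ∈ B', i < n) → Invariant f (Preseq n A B') := by
  constructor
  · intro hinv B' hBB' hB'n
    rcases A.eq_empty_or_nonempty with hA | ⟨a, haA⟩
    · subst hA
      intro x hx
      right
      intro i j hi hj
      have hconst : ∀ m, x m i = x m j := by
        intro m
        rcases hx m with ⟨i', hi', _⟩ | hc
        · exact absurd hi' (by simp)
        · exact hc i j hi hj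
      show f (fun m => x m i) = f (fun m => x m j)
      exact congrArg f (funext hconst)
    · obtain ⟨b, hb⟩ := Finset.card_eq_one.mp hBA
      have hbmem : b ∈ B \ A := hb ▸ Finset.mem_singleton_self b
      have hbB : b ∈ B := (Finset.mem_sdiff.mp hbmem).1
      have hbA : b ∉ A := (Finset.mem_sdiff.mp hbmem).2
      have hbn : b < n := hBn b hbB
      have han : a < n := hBn a (hAB haA)
      intro x hx
      by_cases hbot : ∃ i : Fin n, (i : ℕ) ∈ A ∧ (f fun m => x m i) = ⊥
      · exact Or.inl hbot
      push_neg at hbot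
      right
      have claim : ∀ (c : ℕ) (hc : c < n), c ∈ B' →
          f (fun m => x m ⟨c, hc⟩) = f (fun m => x m ⟨a, han⟩) := by
        intro c hc hcB'
        set e : Fin n → Fin n := fun i => if (i : ℕ) = b then ⟨c, hc⟩ else i with he
        have hmem : ∀ m, (fun i => x m (e i)) ∈ Preseq n A B := by
          intro m
          rcases hx m with ⟨i, hiA, hib⟩ | hcst
          · left
            refine ⟨i, hiA, ?_⟩
            have hei : e i = i := if_neg (fun (h : (i : ℕ) = b) => hbA (h ▸ hiA))
            show x m (e i) = ⊥
            rw [hei]; exact hib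
          · right
            intro i j hiB hjB
            have hmap : ∀ p : Fin n, (p : ℕ) ∈ B → ((e p : Fin n) : ℕ) ∈ B' := by
              intro p hpB
              by_cases h : (p : ℕ) = b
              · simp only [he, h, if_pos rfl]; exact hcB'
              · simp only [he, if_neg h]; exact hBB' hpB
            exact hcst (e i) (e j) (hmap i hiB) (hmap j hjB)
        have key := hinv (fun m i => x m (e i)) hmem
        rcases key with ⟨i, hiA, hibot⟩ | hcst
        · exfalso
          have hei : e i = i := if_neg (fun (h : (i : ℕ) = b) => hbA (h ▸ hiA))
          have : f (fun m => x m (e i)) = ⊥ := hibot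
          rw [hei] at this
          exact hbot i hiA this
        · have h1 := hcst ⟨b, hbn⟩ ⟨a, han⟩ hbB (hAB haA)
          have heb : e ⟨b, hbn⟩ = ⟨c, hc⟩ := if_pos rfl
          have hea : e ⟨a, han⟩ = ⟨a, han⟩ := if_neg (fun (h : ((⟨a, han⟩ : Fin n) : ℕ) = b) => hbA (h ▸ haA))
          have h1' : f (fun m => x m (e ⟨b, hbn⟩)) = f (fun m => x m (e ⟨a, han⟩)) := h1
          rw [heb, hea] at h1'
          exact h1'
      intro i j hiB' hjB'
      have h1 : f (fun m => x m i) = f (fun m => x m ⟨a, han⟩) := claim i i.isLt hiB'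
      have h2 : f (fun m => x m j) = f (fun m => x m ⟨a, han⟩) := claim j j.isLt hjB'
      exact h1.trans h2.symm
  · intro h
    exact h B (le_refl B) hBn
end

section
/- Let f be a first-order monotone boolean function of arity k and let A ⊆ B ⊆ {1,…,n}. If f is invariant under P^n_{A,B}, then for every B' with A ⊆ B' ⊆ B, f is invariant under P^n_{A,B'}. -/
/-- invariance under `P^n_{A,B}` implies invariance under `P^n_{A,B'}`
for every `B'` with `A ⊆ B' ⊆ B`. -/
theorem stmt_4 {k n : ℕ} (f : (Fin k → Bb) → Bb) (hf : FlatMono f)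
    (A B : Finset ℕ) (hAB : A ⊆ B) (hBn : ∀ i ∈ B, i < n)
    (h : Invariant f (Preseq n A B)) :
    ∀ B' : Finset ℕ, A ⊆ B' → B' ⊆ B → Invariant f (Preseq n A B') := by
  intro B' hAB' hB'B x hx
  rcases B'.eq_empty_or_nonempty with hB' | ⟨b0, hb0⟩
  · right; intro i j hi hj; simp [hB'] at hi
  · have hb0n : b0 < n := hBn b0 (hB'B hb0)
    set i0 : Fin n := ⟨b0, hb0n⟩ with hi0
    have hi0B' : (i0 : ℕ) ∈ B' := hb0
    set x' : Fin k → Fin n → Bb :=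
      fun m i => if (i : ℕ) ∈ B ∧ (i : ℕ) ∉ B' then x m i0 else x m i with hx'def
    have key : ∀ (m : Fin k) (i : Fin n), (i : ℕ) ∈ B' → x' m i = x m i := by
      intro m i hi
      simp only [hx'def]
      rw [if_neg]
      rintro ⟨-, hni⟩; exact hni hi
    have hx' : ∀ m, x' m ∈ Preseq n A B := by
      intro m
      rcases hx m with ⟨i, hiA, hbot⟩ | hc
      · left; exact ⟨i, hiA, by rw [key m i (hAB' hiA)]; exact hbot⟩
      · right
        have hall : ∀ i : Fin n, (i : ℕ) ∈ B → x' m i = x m i0 := by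
          intro i hiB
          by_cases hiB' : (i : ℕ) ∈ B'
          · rw [key m i hiB']; exact hc i i0 hiB' hi0B'
          · simp only [hx'def]; rw [if_pos ⟨hiB, hiB'⟩]
        intro i j hi hj; rw [hall i hi, hall j hj]
    have hy' := h x' hx'
    rcases hy' with ⟨i, hiA, hbot⟩ | hc
    · left
      refine ⟨i, hiA, ?_⟩
      have heq : (fun m => x m i) = fun m => x' m i := by
        funext m; rw [key m i (hAB' hiA)]
      simpa [heq] using hbot
    · right
      intro i j hi hj
      have heqi : (fun m => x m i) = fun m => x' m i := by
        funext m; rw [key m i hi]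
      have heqj : (fun m => x m j) = fun m => x' m j := by
        funext m; rw [key m j hj]
      show f (fun m => x m i) = f (fun m => x m j)
      rw [heqi, heqj]
      exact hc i j (hB'B hi) (hB'B hj)
end

section
/- (Reduction Lemma, part 1.) Let f be a first-order monotone boolean function of arity k and let A ⊆ {1,…,n}. Then f is invariant under P^n_{A,A} if and only if f is invariant under P^{|A|}_{|A|,|A|}, the presequentiality relation of arity |A| in which both index sets are all of {1,…,|A|}. -/
/-- Reduction Lemma, part 1: invariance under `P^n_{A,A}` is equivalent
to invariance under `P^{|A|}_{|A|,|A|}`. -/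
theorem stmt_5 {k n : ℕ} (f : (Fin k → Bb) → Bb) (hf : FlatMono f)
    (A : Finset ℕ) (hAn : ∀ i ∈ A, i < n) :
    Invariant f (Preseq n A A) ↔ Invariant f (PreseqSeg A.card A.card A.card) := by
  classical
  set m := A.card with hm
  set e : Fin m ≃o A := A.orderIsoOfFin hm.symm with he
  set g : Fin m → Fin n := fun t => ⟨((e t : A) : ℕ), hAn _ (e t).2⟩ with hg
  have hgA : ∀ t, ((g t : Fin n) : ℕ) ∈ A := fun t => (e t).2
  have hsurj : ∀ i : Fin n, (i : ℕ) ∈ A → ∃ t, g t = i := by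
    intro i hi
    refine ⟨e.symm ⟨(i : ℕ), hi⟩, ?_⟩
    apply Fin.ext
    simp [hg]
  constructor
  · intro H x hx
    set x' : Fin k → Fin n → Bb := fun j i =>
      if h : (i : ℕ) ∈ A then x j (e.symm ⟨(i : ℕ), h⟩) else ⊥ with hx'
    have key : ∀ j t, x' j (g t) = x j t := by
      intro j t
      have h := hgA t
      simp only [hx']
      rw [dif_pos h]
      congr 1
      have : (⟨((g t : Fin n) : ℕ), h⟩ : A) = e t := by
        apply Subtype.ext; rfl
      rw [this, OrderIso.symm_apply_apply]
    have hcol : ∀ j, x' j ∈ Preseq n A A := by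
      intro j
      rcases hx j with ⟨t, _, ht⟩ | hall
      · left; exact ⟨g t, hgA t, by rw [key]; exact ht⟩
      · right
        intro i i' hi hi'
        simp only [hx']
        rw [dif_pos hi, dif_pos hi']
        exact hall _ _ (by simp [Finset.mem_range]) (by simp [Finset.mem_range])
    have hy := H x' hcol
    rcases hy with ⟨i, hi, hib⟩ | hall
    · obtain ⟨t, rfl⟩ := hsurj i hi
      left
      refine ⟨t, by simp [Finset.mem_range], ?_⟩
      have h3 : (fun j => x' j (g t)) = fun j => x j t := funext fun j => key j t
      show f (fun j => x j t) = ⊥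
      rw [← h3]; exact hib
    · right
      intro t s _ _
      have h1 : (fun j => x j t) = fun j => x' j (g t) := funext fun j => (key j t).symm
      have h2 : (fun j => x j s) = fun j => x' j (g s) := funext fun j => (key j s).symm
      show f (fun j => x j t) = f (fun j => x j s)
      rw [h1, h2]
      exact hall _ _ (hgA t) (hgA s)
  · intro H x hx
    set x' : Fin k → Fin m → Bb := fun j t => x j (g t) with hx'
    have hcol : ∀ j, x' j ∈ PreseqSeg m m m := by
      intro j
      rcases hx j with ⟨i, hi, hib⟩ | hall
      · obtain ⟨t, rfl⟩ := hsurj i hi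
        left; exact ⟨t, by simp [Finset.mem_range], hib⟩
      · right
        intro t s _ _
        exact hall _ _ (hgA t) (hgA s)
    have hy := H x' hcol
    rcases hy with ⟨t, _, htb⟩ | hall
    · left; exact ⟨g t, hgA t, htb⟩
    · right
      intro i i' hi hi'
      obtain ⟨t, rfl⟩ := hsurj i hi
      obtain ⟨s, rfl⟩ := hsurj i' hi'
      exact hall t s (by simp [Finset.mem_range]) (by simp [Finset.mem_range])
end

section
/- (Reduction Lemma, part 2.) Let f be a first-order monotone boolean function of arity k and let A ⊊ B ⊆ {1,…,n}. Then f is invariant under P^n_{A,B} if and only if f is invariant under P^{|A|+1}_{|A|,|A|+1}, the presequentiality relation of arity |A|+1 with first index set {1,…,|A|} and second index set {1,…,|A|+1}. -/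
private def bmeet (u v : Bb) : Bb := if u = v then u else ⊥

private lemma bmeet_le_left (u v : Bb) : bLE (bmeet u v) u := by
  unfold bmeet bLE; split
  · exact Or.inr rfl
  · exact Or.inl rfl

private lemma bmeet_le_right (u v : Bb) : bLE (bmeet u v) v := by
  unfold bmeet bLE; split
  · next h => exact Or.inr h
  · exact Or.inl rfl

private lemma bmeet_self (u : Bb) : bmeet u u = u := if_pos rfl

/-- Reduction Lemma, part 2: for `A ⊊ B`, invariance under `P^n_{A,B}`
is equivalent to invariance under `P^{|A|+1}_{|A|,|A|+1}`. -/
theorem stmt_6 {k n : ℕ} (f : (Fin k → Bb) → Bb) (hf : FlatMono f)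
    (A B : Finset ℕ) (hAB : A ⊂ B) (hBn : ∀ i ∈ B, i < n) :
    Invariant f (Preseq n A B) ↔
      Invariant f (PreseqSeg (A.card + 1) A.card (A.card + 1)) := by
  classical
  have hAsub : A ⊆ B := hAB.subset
  set e : Fin A.card ≃o {x // x ∈ A} := A.orderIsoOfFin rfl with hedef
  have hψlt : ∀ a : Fin A.card, ((e a : ℕ)) < n := fun a => hBn _ (hAsub (e a).2)
  set ψ : Fin A.card → Fin n := fun a => ⟨(e a : ℕ), hψlt a⟩ with hψdef
  have hψA : ∀ a, (ψ a : ℕ) ∈ A := fun a => (e a).2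
  have hψsymm : ∀ (i : Fin n) (h : (i : ℕ) ∈ A), ψ (e.symm ⟨(i : ℕ), h⟩) = i := by
    intro i h
    apply Fin.ext
    show ((e (e.symm ⟨(i : ℕ), h⟩) : ℕ)) = (i : ℕ)
    rw [e.apply_symm_apply]
  constructor
  · intro hinv x hx
    obtain ⟨bb, hbbB, hbbA⟩ := Finset.exists_of_ssubset hAB
    set φ : Fin n → Fin (A.card + 1) := fun i =>
      if h : (i : ℕ) ∈ A then
        ⟨(e.symm ⟨(i : ℕ), h⟩ : Fin A.card), Nat.lt_succ_of_lt (e.symm ⟨(i : ℕ), h⟩).isLt⟩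
      else Fin.last A.card with hφdef
    have hφA : ∀ (i : Fin n), (i : ℕ) ∈ A → (φ i : ℕ) < A.card := by
      intro i h
      simp only [hφdef, dif_pos h]
      exact (e.symm ⟨(i : ℕ), h⟩).isLt
    have hφψ : ∀ a : Fin A.card, φ (ψ a) = ⟨(a : ℕ), Nat.lt_succ_of_lt a.isLt⟩ := by
      intro a
      have h : ((ψ a : ℕ)) ∈ A := hψA a
      simp only [hφdef, dif_pos h]
      have h2 : (⟨(ψ a : ℕ), h⟩ : {x // x ∈ A}) = e a := Subtype.ext rfl
      apply Fin.ext
      show ((e.symm ⟨(ψ a : ℕ), h⟩ : Fin A.card) : ℕ) = (a : ℕ)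
      rw [h2, e.symm_apply_apply]
    have hx' : ∀ j, (fun i => x j (φ i)) ∈ Preseq n A B := by
      intro j
      have hxj := hx j
      simp only [PreseqSeg, Preseq, Set.mem_setOf_eq, Finset.mem_range] at hxj ⊢
      rcases hxj with ⟨i', hi'm, hbot⟩ | hconst
      · left
        refine ⟨ψ ⟨(i' : ℕ), hi'm⟩, hψA _, ?_⟩
        rw [hφψ]
        have : (⟨((⟨(i' : ℕ), hi'm⟩ : Fin A.card) : ℕ), _⟩ : Fin (A.card + 1)) = i' :=
          Fin.ext rfl
        rw [this]
        exact hbot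
      · right
        intro i i' _ _
        exact hconst (φ i) (φ i') (φ i).isLt (φ i').isLt
    have hz := hinv (fun j i => x j (φ i)) hx'
    simp only [Preseq, PreseqSeg, Set.mem_setOf_eq, Finset.mem_range] at hz ⊢
    rcases hz with ⟨i, hiA, hbot⟩ | hconst
    · left
      exact ⟨φ i, hφA i hiA, hbot⟩
    · right
      intro i' j' _ _
      have hpre : ∀ u : Fin (A.card + 1), ∃ v : Fin n, (v : ℕ) ∈ B ∧ φ v = u := by
        intro u
        rcases Nat.lt_or_ge (u : ℕ) A.card with h | h
        · refine ⟨ψ ⟨(u : ℕ), h⟩, hAsub (hψA _), ?_⟩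
          rw [hφψ]
        · refine ⟨⟨bb, hBn bb hbbB⟩, hbbB, ?_⟩
          have hb : φ ⟨bb, hBn bb hbbB⟩ = Fin.last A.card := by
            simp only [hφdef, dif_neg hbbA]
          rw [hb]
          exact Fin.ext (by have := u.isLt; simp [Fin.last]; omega)
      obtain ⟨v1, hv1B, hv1⟩ := hpre i'
      obtain ⟨v2, hv2B, hv2⟩ := hpre j'
      have h := hconst v1 v2 hv1B hv2B
      rw [hv1, hv2] at h
      exact h
  · intro hinv y hy
    rcases Nat.eq_zero_or_pos A.card with hm0 | hm1
    · have hAe : A = ∅ := Finset.card_eq_zero.mp hm0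
      simp only [Preseq, Set.mem_setOf_eq]
      right
      intro i j hi hj
      have hcol : (fun m => y m i) = (fun m => y m j) := by
        funext j'
        have hyj := hy j'
        simp only [Preseq, Set.mem_setOf_eq] at hyj
        rcases hyj with ⟨i1, hi1, _⟩ | hconst
        · rw [hAe] at hi1; exact absurd hi1 (Finset.notMem_empty _)
        · exact hconst i j hi hj
      rw [hcol]
    · simp only [Preseq, Set.mem_setOf_eq]
      by_cases hbot : ∃ i : Fin n, (i : ℕ) ∈ A ∧ f (fun m => y m i) = ⊥
      · exact Or.inl hbot
      push_neg at hbot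
      right
      intro i0 j0 hi0 hj0
      set x : Fin k → Fin (A.card + 1) → Bb := fun j i' =>
        if h : (i' : ℕ) < A.card then y j (ψ ⟨(i' : ℕ), h⟩) else bmeet (y j i0) (y j j0)
        with hxdef
      have hx : ∀ j, x j ∈ PreseqSeg (A.card + 1) A.card (A.card + 1) := by
        intro j
        have hyj := hy j
        simp only [Preseq, Set.mem_setOf_eq] at hyj
        simp only [PreseqSeg, Preseq, Set.mem_setOf_eq, Finset.mem_range]
        rcases hyj with ⟨i, hiA, hb⟩ | hconst
        · left
          set a : Fin A.card := e.symm ⟨(i : ℕ), hiA⟩ with hadef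
          refine ⟨⟨(a : ℕ), Nat.lt_succ_of_lt a.isLt⟩, a.isLt, ?_⟩
          simp only [hxdef]
          rw [dif_pos (show (((⟨(a : ℕ), Nat.lt_succ_of_lt a.isLt⟩ : Fin (A.card + 1))) : ℕ) < A.card from a.isLt)]
          have h2 : (⟨((⟨(a : ℕ), Nat.lt_succ_of_lt a.isLt⟩ : Fin (A.card + 1)) : ℕ), a.isLt⟩ : Fin A.card) = a := Fin.ext rfl
          rw [h2, hadef, hψsymm]
          exact hb
        · right
          intro i' j' _ _
          have key : ∀ u : Fin (A.card + 1), x j u = y j i0 := by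
            intro u
            simp only [hxdef]
            split
            · next h => exact hconst _ _ (hAsub (hψA ⟨(u : ℕ), h⟩)) hi0
            · rw [hconst i0 j0 hi0 hj0, bmeet_self]
          rw [key i', key j']
      have hz := hinv x hx
      simp only [PreseqSeg, Preseq, Set.mem_setOf_eq, Finset.mem_range] at hz
      rcases hz with ⟨i', hi'm, hb⟩ | hconst
      · exfalso
        have hcol : (fun m => x m i') = (fun m => y m (ψ ⟨(i' : ℕ), hi'm⟩)) := by
          funext j
          simp only [hxdef]
          rw [dif_pos hi'm]
        rw [hcol] at hb
        exact hbot _ (hψA _) hb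
      · -- columns: index 0 and index last
        set u0 : Fin (A.card + 1) := ⟨0, by omega⟩ with hu0def
        set ul : Fin (A.card + 1) := ⟨A.card, Nat.lt_succ_self _⟩ with huldef
        have h0l := hconst u0 ul u0.isLt ul.isLt
        have hcol0 : (fun m => x m u0) = (fun m => y m (ψ ⟨0, hm1⟩)) := by
          funext j
          simp only [hxdef, hu0def]
          rw [dif_pos (show (0 : ℕ) < A.card from hm1)]
        have hcoll : (fun m => x m ul) = (fun m => bmeet (y m i0) (y m j0)) := by
          funext j
          simp only [hxdef, huldef]
          rw [dif_neg (lt_irrefl A.card)]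
        rw [hcol0, hcoll] at h0l
        have hne : f (fun m => y m (ψ ⟨0, hm1⟩)) ≠ ⊥ := hbot _ (hψA _)
        have hle0 : tupLE (fun m => bmeet (y m i0) (y m j0)) (fun m => y m i0) :=
          fun m => bmeet_le_left _ _
        have hle1 : tupLE (fun m => bmeet (y m i0) (y m j0)) (fun m => y m j0) :=
          fun m => bmeet_le_right _ _
        have hm0' := hf _ _ hle0
        have hm1' := hf _ _ hle1
        rcases hm0' with h | h
        · rw [h] at h0l; exact absurd h0l hne
        rcases hm1' with h' | h'
        · rw [h'] at h0l; exact absurd h0l hne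
        rw [← h, ← h']
end

section
/- (Closure Lemma.) Let f be a first-order monotone boolean function of arity k and let m ≥ 0. Then: (1) if f is invariant under P^{m+1}_{m,m+1} then f is invariant under P^m_{m,m}; (2) if f is invariant under P^{m+1}_{m+1,m+1} then f is invariant under P^m_{m,m}; (3) if f is invariant under P^{m+2}_{m+1,m+2} then f is invariant under P^{m+1}_{m,m+1}. -/
/-- Reindexing columns transfers invariance between presequentiality relations. -/
lemma invariant_reindex {k n n' : ℕ} (f : (Fin k → Bb) → Bb) (A B A' B' : Finset ℕ)
    (g : Fin n' → Fin n)
    (hA : ∀ i : Fin n, (i : ℕ) ∈ A → ∃ j : Fin n', (j : ℕ) ∈ A' ∧ g j = i)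
    (hB' : ∀ j : Fin n', (j : ℕ) ∈ B' → ((g j : ℕ)) ∈ B)
    (hA' : ∀ j : Fin n', (j : ℕ) ∈ A' → ((g j : ℕ)) ∈ A)
    (hB : ∀ i : Fin n, (i : ℕ) ∈ B → ∃ j : Fin n', (j : ℕ) ∈ B' ∧ g j = i)
    (hf : Invariant f (Preseq n' A' B')) : Invariant f (Preseq n A B) := by
  intro x hx
  have h := hf (fun a => x a ∘ g) ?_
  · rcases h with ⟨j, hjA, hj⟩ | h
    · exact Or.inl ⟨g j, hA' j hjA, hj⟩
    · refine Or.inr fun i i' hi hi' => ?_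
      obtain ⟨j, hj, rfl⟩ := hB i hi
      obtain ⟨j', hj', rfl⟩ := hB i' hi'
      exact h j j' hj hj'
  · intro a
    rcases hx a with ⟨i, hiA, hib⟩ | hall
    · obtain ⟨j, hj, hgj⟩ := hA i hiA
      exact Or.inl ⟨j, hj, by simp [Function.comp, hgj, hib]⟩
    · exact Or.inr fun j j' hj hj' => hall (g j) (g j') (hB' j hj) (hB' j' hj')

/-- Closure Lemma. -/
theorem stmt_7 {k : ℕ} (f : (Fin k → Bb) → Bb) (hf : FlatMono f) (m : ℕ) :
    (Invariant f (PreseqSeg (m + 1) m (m + 1)) → Invariant f (PreseqSeg m m m)) ∧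
    (Invariant f (PreseqSeg (m + 1) (m + 1) (m + 1)) → Invariant f (PreseqSeg m m m)) ∧
    (Invariant f (PreseqSeg (m + 2) (m + 1) (m + 2)) →
      Invariant f (PreseqSeg (m + 1) m (m + 1))) := by

  have triv0 : Invariant f (PreseqSeg 0 0 0) := by
    intro x hx
    exact Or.inr fun i j _ _ => i.elim0
  have triv1 : Invariant f (PreseqSeg 1 0 1) := by
    intro x hx
    exact Or.inr fun i j _ _ => by rw [Subsingleton.elim i j]
  refine ⟨?_, ?_, ?_⟩
  · rcases Nat.eq_zero_or_pos m with rfl | hm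
    · exact fun _ => triv0
    · intro h
      refine invariant_reindex f _ _ _ _
        (fun j : Fin (m + 1) => if hj : (j : ℕ) < m then ⟨j, hj⟩ else ⟨0, hm⟩)
        ?_ ?_ ?_ ?_ h
      · intro i hi
        simp only [Finset.mem_range] at hi
        exact ⟨⟨i, by omega⟩, by simp [Finset.mem_range, hi], by simp [hi]⟩
      · intro j _
        simp only [Finset.mem_range]
        split <;> simpa
      · intro j hj
        simp only [Finset.mem_range] at hj ⊢
        split <;> simpa
      · intro i hi
        simp only [Finset.mem_range] at hi
        exact ⟨⟨i, by omega⟩, by simp [Finset.mem_range]; try omega, by simp [hi]⟩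
  · rcases Nat.eq_zero_or_pos m with rfl | hm
    · exact fun _ => triv0
    · intro h
      refine invariant_reindex f _ _ _ _
        (fun j : Fin (m + 1) => if hj : (j : ℕ) < m then ⟨j, hj⟩ else ⟨0, hm⟩)
        ?_ ?_ ?_ ?_ h
      · intro i hi
        simp only [Finset.mem_range] at hi
        exact ⟨⟨i, by omega⟩, by simp [Finset.mem_range]; try omega, by simp [hi]⟩
      · intro j _
        simp only [Finset.mem_range]
        split <;> simpa
      · intro j _
        simp only [Finset.mem_range]
        split <;> simpa
      · intro i hi
        simp only [Finset.mem_range] at hi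
        exact ⟨⟨i, by omega⟩, by simp [Finset.mem_range]; try omega, by simp [hi]⟩
  · rcases Nat.eq_zero_or_pos m with rfl | hm
    · exact fun _ => triv1
    · intro h
      refine invariant_reindex f _ _ _ _
        (fun j : Fin (m + 2) => if hj : (j : ℕ) < m then ⟨j, by omega⟩
          else if (j : ℕ) = m then ⟨0, by omega⟩ else ⟨m, by omega⟩)
        ?_ ?_ ?_ ?_ h
      · intro i hi
        simp only [Finset.mem_range] at hi
        exact ⟨⟨i, by omega⟩, by simp [Finset.mem_range]; try omega, by simp [hi]⟩
      · intro j _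
        simp only [Finset.mem_range]
        split
        · omega
        · split <;> simp <;> omega
      · intro j hj
        simp only [Finset.mem_range] at hj ⊢
        split
        · simpa
        · split
          · simpa
          · omega
      · intro i hi
        simp only [Finset.mem_range] at hi
        rcases Nat.lt_or_ge (i : ℕ) m with h2 | h2
        · exact ⟨⟨i, by omega⟩, by simp [Finset.mem_range]; try omega, by simp [h2]⟩
        · have : (i : ℕ) = m := by omega
          refine ⟨⟨m + 1, by omega⟩, by simp [Finset.mem_range], ?_⟩
          simp only []
          rw [dif_neg (by simp; try omega), if_neg (by simp; try omega)]
          exact Fin.ext (by simp [this.symm])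
end

section
/- Let f be a first-order monotone boolean function of arity k and suppose cc(f) = c is finite (so π₁(tr f) has a linearly coherent subset of cardinality ≥ 2, and c is the minimum such cardinality). Then f is invariant under P^c_{c−1,c} but f is not invariant under P^{c+1}_{c,c+1}. -/
section aux
variable {k : ℕ}

lemma bLE_eq {a b : Bb} (h : bLE a b) (ha : a ≠ ⊥) : a = b := h.resolve_left ha

lemma tupLE_refl (x : Fin k → Bb) : tupLE x x := fun _ => Or.inr rfl

lemma tupLE_trans {x y z : Fin k → Bb} (h1 : tupLE x y) (h2 : tupLE y z) : tupLE x z := by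
  intro i
  rcases h1 i with h | h
  · exact Or.inl h
  · rw [h]; exact h2 i

/-- support of a tuple -/
def supp (v : Fin k → Bb) : Finset (Fin k) := Finset.univ.filter (fun m => v m ≠ ⊥)

lemma mem_supp {v : Fin k → Bb} {m : Fin k} : m ∈ supp v ↔ v m ≠ ⊥ := by
  simp [supp]

lemma supp_card_lt {v' v : Fin k → Bb} (h : tupLT v' v) : (supp v').card < (supp v).card := by
  apply Finset.card_lt_card
  constructor
  · intro m hm
    rw [mem_supp] at *
    rcases h.1 m with hb | he
    · exact absurd hb hm
    · rw [← he]; exact hm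
  · intro hsub
    apply h.2
    funext m
    rcases h.1 m with hb | he
    · by_contra hne
      have hm : m ∈ supp v := by
        rw [mem_supp]
        intro h0
        exact hne (by rw [hb, h0])
      have := hsub hm
      rw [mem_supp] at this
      exact this hb
    · exact he

lemma exists_min {f : (Fin k → Bb) → Bb} (hf : FlatMono f) :
    ∀ n (v : Fin k → Bb), (supp v).card ≤ n → f v ≠ ⊥ →
      ∃ u, tupLE u v ∧ u ∈ traceDom f ∧ f u = f v := by
  intro n
  induction n using Nat.strong_induction_on with
  | _ n ih =>
    intro v hcard hv
    by_cases h : ∀ v', tupLT v' v → f v' = ⊥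
    · exact ⟨v, tupLE_refl v, ⟨hv, h⟩, rfl⟩
    · push_neg at h
      obtain ⟨v', hlt, hne⟩ := h
      have hlt' := supp_card_lt hlt
      obtain ⟨u, h1, h2, h3⟩ := ih (supp v').card (by omega) v' le_rfl hne
      refine ⟨u, tupLE_trans h1 hlt.1, h2, ?_⟩
      rw [h3]
      exact bLE_eq (hf _ _ hlt.1) hne

end aux

/-- if `cc f = c` is finite, then `f` is invariant under `P^c_{c-1,c}`
but not under `P^{c+1}_{c,c+1}`. -/
theorem stmt_9 {k : ℕ} (f : (Fin k → Bb) → Bb) (hf : FlatMono f)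
    (c : ℕ) (hc : cc f = (c : ℕ∞)) :
    Invariant f (PreseqSeg c (c - 1) c) ∧
    ¬ Invariant f (PreseqSeg (c + 1) c (c + 1)) := by
  set T := {t : ℕ∞ | ∃ S : Finset (Fin k → Bb),
    ↑S ⊆ traceDom f ∧ 2 ≤ S.card ∧ LinCoherent (↑S : Set (Fin k → Bb)) ∧ t = (S.card : ℕ∞)}
    with hT
  have h0 : sInf T = cc f := rfl
  have hne : T.Nonempty := by
    by_contra h
    rw [Set.not_nonempty_iff_eq_empty] at h
    rw [← h0, h, sInf_empty] at hc
    simp at hc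
  have hmem : (c : ℕ∞) ∈ T := by rw [← hc, ← h0]; exact csInf_mem hne
  have hlow : ∀ S : Finset (Fin k → Bb), ↑S ⊆ traceDom f → 2 ≤ S.card →
      LinCoherent (↑S : Set (Fin k → Bb)) → c ≤ S.card := by
    intro S h1 h2 h3
    have hm : (S.card : ℕ∞) ∈ T := ⟨S, h1, h2, h3, rfl⟩
    have := sInf_le hm
    rw [h0, hc] at this
    exact_mod_cast this
  obtain ⟨S0, hsub0, hcard0, hcoh0, heq0⟩ := hmem
  have hcc : S0.card = c := by exact_mod_cast heq0.symm
  have hc2 : 2 ≤ c := hcc ▸ hcard0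
  constructor
  · -- Invariant under P^c_{c-1,c}
    intro x hx
    by_cases hA : ∃ i : Fin c, (i : ℕ) ∈ Finset.range (c - 1) ∧ f (fun m => x m i) = ⊥
    · exact Or.inl hA
    push_neg at hA
    have hA' : ∀ n (h : n < c - 1), f (fun m => x m ⟨n, by omega⟩) ≠ ⊥ := by
      intro n h
      exact hA ⟨n, by omega⟩ (Finset.mem_range.mpr h)
    have hu : ∀ n : ℕ, ∃ uv : Fin k → Bb, ∀ h : n < c - 1,
        tupLE uv (fun m => x m ⟨n, by omega⟩) ∧ uv ∈ traceDom f ∧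
        f uv = f (fun m => x m ⟨n, by omega⟩) := by
      intro n
      by_cases h : n < c - 1
      · obtain ⟨u, h1, h2, h3⟩ := exists_min hf _ _ le_rfl (hA' n h)
        exact ⟨u, fun _ => ⟨h1, h2, h3⟩⟩
      · exact ⟨fun _ => ⊥, fun h' => absurd h' h⟩
    choose U hU using hu
    -- column dichotomy
    have hcol : ∀ m : Fin k, (∀ n (h : n < c - 1), U n m ≠ ⊥) →
        ∀ i j : Fin c, x m i = x m j := by
      intro m hnb i j
      rcases hx m with ⟨i', hi', hb⟩ | hcst
      · exfalso
        have h' : (i' : ℕ) < c - 1 := Finset.mem_range.mp hi'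
        have ht := ((hU i' h').1 m)
        have hval : U (i' : ℕ) m = x m ⟨(i' : ℕ), by omega⟩ := bLE_eq ht (hnb _ h')
        rw [Fin.eta] at hval
        exact (hnb _ h') (hval.trans hb)
      · exact hcst i j (Finset.mem_range.mpr i.isLt) (Finset.mem_range.mpr j.isLt)
    -- all minimal points coincide
    have hall : ∀ n, n < c - 1 → ∀ n', n' < c - 1 → U n = U n' := by
      by_contra hcon
      push_neg at hcon
      obtain ⟨a, ha, b, hb, hab⟩ := hcon
      set S : Finset (Fin k → Bb) := (Finset.range (c - 1)).image U with hS
      have hmemS : ∀ n, n < c - 1 → U n ∈ S := by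
        intro n hn
        exact Finset.mem_image.mpr ⟨n, Finset.mem_range.mpr hn, rfl⟩
      have hsub : ↑S ⊆ traceDom f := by
        intro v hv
        simp only [hS, Finset.coe_image, Set.mem_image, Finset.mem_coe,
          Finset.mem_range] at hv
        obtain ⟨n, hn, rfl⟩ := hv
        exact ((hU n hn).2.1 : _)
      have hcoh : LinCoherent (↑S : Set (Fin k → Bb)) := by
        intro m hnb v hv w hw
        simp only [hS, Finset.coe_image, Set.mem_image, Finset.mem_coe,
          Finset.mem_range] at hv hw
        obtain ⟨n, hn, rfl⟩ := hv
        obtain ⟨n', hn', rfl⟩ := hw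
        have hnb' : ∀ n'' (h'' : n'' < c - 1), U n'' m ≠ ⊥ :=
          fun n'' h'' => hnb (U n'') (hmemS n'' h'')
        have hcol' := hcol m hnb'
        have e1 : U n m = x m ⟨n, by omega⟩ := bLE_eq ((hU n hn).1 m) (hnb' n hn)
        have e2 : U n' m = x m ⟨n', by omega⟩ := bLE_eq ((hU n' hn').1 m) (hnb' n' hn')
        rw [e1, e2]
        exact hcol' _ _
      have hcard2 : 2 ≤ S.card := by
        rw [show (2 : ℕ) = 1 + 1 from rfl]
        exact Finset.one_lt_card.mpr ⟨U a, hmemS a ha, U b, hmemS b hb, hab⟩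
      have hge := hlow S hsub hcard2 hcoh
      have hle : S.card ≤ c - 1 :=
        le_trans Finset.card_image_le (by simp)
      omega
    have hc1 : 0 < c - 1 := by omega
    have htr0 : U 0 ∈ traceDom f := (hU 0 hc1).2.1
    have hnb0 : f (U 0) ≠ ⊥ := htr0.1
    have hle : ∀ j : Fin c, tupLE (U 0) (fun m => x m j) := by
      intro j m
      by_cases hb : U 0 m = ⊥
      · exact Or.inl hb
      · right
        have hnb : ∀ n (h : n < c - 1), U n m ≠ ⊥ := by
          intro n h
          rw [hall n h 0 hc1]
          exact hb
        have e0 : U 0 m = x m ⟨0, by omega⟩ := bLE_eq ((hU 0 hc1).1 m) hb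
        rw [e0]
        exact hcol m hnb _ j
    right
    intro i j _ _
    have hi := bLE_eq (hf _ _ (hle i)) hnb0
    have hj := bLE_eq (hf _ _ (hle j)) hnb0
    show f (fun m => x m i) = f (fun m => x m j)
    rw [← hi, ← hj]
  · -- Not invariant under P^{c+1}_{c,c+1}
    intro hInv
    let e : Fin c → (Fin k → Bb) :=
      fun i => ((S0.equivFin.symm (Fin.cast hcc.symm i)) : Fin k → Bb)
    have he_mem : ∀ i, e i ∈ S0 := fun i => (S0.equivFin.symm (Fin.cast hcc.symm i)).2
    have he_inj : Function.Injective e := by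
      intro i j hij
      have := Subtype.coe_injective hij
      have := S0.equivFin.symm.injective this
      simpa [Fin.ext_iff] using congrArg (Fin.val) this
    have htr : ∀ i, e i ∈ traceDom f := fun i => hsub0 (he_mem i)
    have hfne : ∀ i, f (e i) ≠ ⊥ := fun i => (htr i).1
    have hsurj : ∀ v ∈ S0, ∃ i, e i = v := by
      intro v hv
      refine ⟨Fin.cast hcc (S0.equivFin ⟨v, hv⟩), ?_⟩
      simp [e]
    have hcohe : ∀ m, (∀ i, e i m ≠ ⊥) → ∀ i j, e i m = e j m := by
      intro m h i j
      exact hcoh0 m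
        (fun v hv => by obtain ⟨i', rfl⟩ := hsurj v hv; exact h i')
        (e i) (he_mem i) (e j) (he_mem j)
    set i0 : Fin c := ⟨0, by omega⟩ with hi0
    set i1 : Fin c := ⟨1, by omega⟩ with hi1
    -- pick w depending on the case
    obtain ⟨w, hwagree, hwlast⟩ :
        ∃ w : Fin k → Bb, (∀ m, (∀ i, e i m ≠ ⊥) → w m = e i0 m) ∧
          (f w = ⊥ ∨ ∃ a : Fin c, f w = f (e a) ∧ f (e a) ≠ f (e i0)) := by
      by_cases hcase : ∀ i : Fin c, f (e i) = f (e i0)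
      · refine ⟨fun m => if h : ∀ i, e i m ≠ ⊥ then e i0 m else ⊥, fun m h => dif_pos h, Or.inl ?_⟩
        set w : Fin k → Bb := fun m => if h : ∀ i, e i m ≠ ⊥ then e i0 m else ⊥ with hw
        have hwle : ∀ i, tupLE w (e i) := by
          intro i m
          by_cases h : ∀ i', e i' m ≠ ⊥
          · right
            rw [hw]
            simp only [dif_pos h]
            exact hcohe m h i0 i
          · left
            rw [hw]
            simp only [dif_neg h]
        have hwne : w ≠ e i0 := by
          intro hEq
          have h01 : tupLE (e i0) (e i1) := hEq ▸ hwle i1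
          by_cases h : e i0 = e i1
          · exact absurd (he_inj h) (by simp [hi0, hi1, Fin.ext_iff])
          · exact hfne i0 ((htr i1).2 (e i0) ⟨h01, h⟩)
        exact (htr i0).2 w ⟨hwle i0, hwne⟩
      · push_neg at hcase
        obtain ⟨a, hane⟩ := hcase
        exact ⟨e a, fun m h => hcohe m h a i0, Or.inr ⟨a, rfl, hane⟩⟩
    -- build the matrix
    set r : Fin (c + 1) → (Fin k → Bb) :=
      fun j => if h : (j : ℕ) < c then e ⟨j, h⟩ else w with hr
    set x : Fin k → Fin (c + 1) → Bb := fun m j => r j m with hx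
    have hremb : ∀ i : Fin c, r ⟨(i : ℕ), by omega⟩ = e i := by
      intro i
      rw [hr]
      simp
    have hrlast : r (Fin.last c) = w := by
      rw [hr]
      simp
    have hcols : ∀ m, x m ∈ PreseqSeg (c + 1) c (c + 1) := by
      intro m
      by_cases hm : ∀ i : Fin c, e i m ≠ ⊥
      · right
        intro i j _ _
        have hval : ∀ j : Fin (c + 1), x m j = e i0 m := by
          intro j
          show r j m = e i0 m
          rw [hr]
          by_cases hj : (j : ℕ) < c
          · simp only [dif_pos hj]
            exact hcohe m hm _ i0
          · simp only [dif_neg hj]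
            exact hwagree m hm
        rw [hval i, hval j]
      · push_neg at hm
        obtain ⟨i, hi⟩ := hm
        left
        refine ⟨⟨(i : ℕ), by omega⟩, Finset.mem_range.mpr i.isLt, ?_⟩
        show r ⟨(i : ℕ), by omega⟩ m = ⊥
        rw [hremb i]
        exact hi
    have hy := hInv x hcols
    have hyval : ∀ i : Fin c, f (fun m => x m ⟨(i : ℕ), by omega⟩) = f (e i) := by
      intro i
      show f (r ⟨(i : ℕ), by omega⟩) = f (e i)
      rw [hremb i]
    have hylast : f (fun m => x m (Fin.last c)) = f w := by
      show f (r (Fin.last c)) = f w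
      rw [hrlast]
    rcases hy with ⟨j, hjA, hjb⟩ | hB
    · have hj : (j : ℕ) < c := Finset.mem_range.mp hjA
      have : f (fun m => x m j) = ⊥ := hjb
      have hj' : (⟨(j : ℕ), by omega⟩ : Fin (c + 1)) = j := Fin.eta j j.isLt
      rw [← hj', hyval ⟨(j : ℕ), hj⟩] at this
      exact hfne _ this
    · rcases hwlast with hfw | ⟨a, hfwa, hane⟩
      · have hb := hB ⟨(i0 : ℕ), by omega⟩ (Fin.last c)
          (Finset.mem_range.mpr (by omega)) (Finset.mem_range.mpr (by simp))
        simp only at hb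
        rw [hyval i0, hylast, hfw] at hb
        exact hfne i0 hb
      · have hb := hB (Fin.last c) ⟨(i0 : ℕ), by omega⟩
          (Finset.mem_range.mpr (by simp)) (Finset.mem_range.mpr (by omega))
        simp only at hb
        rw [hyval i0, hylast, hfwa] at hb
        exact hane hb
end

section
/- Let f be a first-order monotone boolean function of arity k and suppose bcc(f) = b is finite (so π₁(tr f) has a bivalued linearly coherent subset of cardinality ≥ 3, and b is the minimum such cardinality). Then f is invariant under P^{b−1}_{b−1,b−1} but f is not invariant under P^b_{b,b}. -/
lemma bLE_trans {a b c : Bb} (h1 : bLE a b) (h2 : bLE b c) : bLE a c := by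
  rcases h1 with h | rfl
  · exact Or.inl h
  · exact h2

lemma bLE_resolve {a b : Bb} (h : bLE a b) (ha : a ≠ ⊥) : b = a := by
  rcases h with h | h
  · exact absurd h ha
  · exact h.symm

lemma exists_traceDom_le {k : ℕ} (f : (Fin k → Bb) → Bb) (hf : FlatMono f)
    (c : Fin k → Bb) (hc : f c ≠ ⊥) :
    ∃ w, w ∈ traceDom f ∧ tupLE w c ∧ f w = f c := by
  classical
  let P : ℕ → Prop := fun n => ∃ v, tupLE v c ∧ f v ≠ ⊥ ∧
    (Finset.univ.filter (fun j => v j ≠ ⊥)).card = n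
  have hP : ∃ n, P n := ⟨_, c, fun i => Or.inr rfl, hc, rfl⟩
  obtain ⟨v, hvc, hv, hvcard⟩ := Nat.find_spec hP
  have hfv : f v = f c := (bLE_resolve (hf v c hvc) hv).symm ▸ rfl
  refine ⟨v, ⟨hv, ?_⟩, hvc, bLE_resolve (hf v c hvc) hv ▸ rfl⟩
  rintro v' ⟨hle, hne⟩
  by_contra hv'
  have hj : ∃ j, v' j ≠ v j := by
    by_contra h
    push_neg at h
    exact hne (funext h)
  obtain ⟨j, hj⟩ := hj
  have hjb : v' j = ⊥ := by
    rcases hle j with h | h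
    · exact h
    · exact absurd h hj
  have hjv : v j ≠ ⊥ := fun h => hj (hjb.trans h.symm)
  have hs : (Finset.univ.filter (fun j => v' j ≠ ⊥)) ⊆
      (Finset.univ.filter (fun j => v j ≠ ⊥)) := by
    intro i hi
    simp only [Finset.mem_filter, Finset.mem_univ, true_and] at hi ⊢
    rcases hle i with h | h
    · exact absurd h hi
    · exact fun hb => hi (h.trans hb)
  have hss : (Finset.univ.filter (fun j => v' j ≠ ⊥)) ⊂
      (Finset.univ.filter (fun j => v j ≠ ⊥)) := by
    refine (Finset.ssubset_iff_of_subset hs).mpr ⟨j, ?_, ?_⟩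
    · simp [hjv]
    · simp [hjb]
  have hlt : (Finset.univ.filter (fun j => v' j ≠ ⊥)).card < Nat.find hP := by
    rw [← hvcard]; exact Finset.card_lt_card hss
  exact Nat.find_min hP hlt ⟨v', fun i => bLE_trans (hle i) (hvc i), hv', rfl⟩

/-- if `bcc f = b` is finite, then `f` is invariant under
`P^{b-1}_{b-1,b-1}` but not under `P^b_{b,b}`. -/
theorem stmt_11 {k : ℕ} (f : (Fin k → Bb) → Bb) (hf : FlatMono f)
    (b : ℕ) (hb : bcc f = (b : ℕ∞)) :
    Invariant f (PreseqSeg (b - 1) (b - 1) (b - 1)) ∧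
    ¬ Invariant f (PreseqSeg b b b) := by
  classical
  -- the defining set of bcc
  set 𝒮 : Set ℕ∞ := {c : ℕ∞ | ∃ S : Finset (Fin k → Bb),
    ↑S ⊆ traceDom f ∧ 3 ≤ S.card ∧ LinCoherent (↑S : Set (Fin k → Bb)) ∧
    (∃ v ∈ S, f v = ((true : Bool) : Bb)) ∧ (∃ v ∈ S, f v = ((false : Bool) : Bb)) ∧
    c = (S.card : ℕ∞)} with h𝒮
  have hinf : sInf 𝒮 = (b : ℕ∞) := hb
  have hmem : (b : ℕ∞) ∈ 𝒮 := by
    by_contra hmem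
    have h2 : ∀ c ∈ 𝒮, (b : ℕ∞) + 1 ≤ c := by
      intro c hc
      have hcb : (b : ℕ∞) ≤ c := hinf ▸ sInf_le hc
      have hne : (b : ℕ∞) ≠ c := fun h => hmem (h ▸ hc)
      obtain ⟨S, -, -, -, -, -, rfl⟩ := hc
      have : b < S.card := by
        have : (b : ℕ∞) < (S.card : ℕ∞) := lt_of_le_of_ne hcb hne
        exact_mod_cast this
      have : b + 1 ≤ S.card := this
      exact_mod_cast this
    have := le_sInf h2
    rw [hinf] at this
    have : (b : ℕ∞) + 1 ≤ (b : ℕ∞) := this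
    have hh : b + 1 ≤ b := by exact_mod_cast this
    omega
  obtain ⟨S, hSsub, hScard3, hScoh, ⟨vt, hvtS, hvt⟩, ⟨vf, hvfS, hvf⟩, hScard⟩ := hmem
  have hSb : S.card = b := by exact_mod_cast hScard.symm
  have hb3 : 3 ≤ b := hSb ▸ hScard3
  -- generic lower bound from bcc = b
  have key_le : ∀ T : Finset (Fin k → Bb), ↑T ⊆ traceDom f → 3 ≤ T.card →
      LinCoherent (↑T : Set (Fin k → Bb)) →
      (∃ v ∈ T, f v = ((true : Bool) : Bb)) → (∃ v ∈ T, f v = ((false : Bool) : Bb)) →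
      b ≤ T.card := by
    intro T h1 h2 h3 h4 h5
    have : (b : ℕ∞) ≤ (T.card : ℕ∞) := hinf ▸ sInf_le ⟨T, h1, h2, h3, h4, h5, rfl⟩
    exact_mod_cast this
  constructor
  · -- invariant under P^{b-1}_{b-1,b-1}
    intro x hx
    by_contra hcon
    simp only [PreseqSeg, Preseq, Set.mem_setOf_eq, not_or, not_exists, not_forall] at hcon
    obtain ⟨hnb, i₀, j₀, -, -, hij⟩ := hcon
    have hnb' : ∀ i : Fin (b-1), f (fun m => x m i) ≠ ⊥ := by
      intro i h
      exact hnb i ⟨by simp [Finset.mem_range, i.isLt], h⟩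
    choose w hw1 hw2 hw3 using fun i : Fin (b-1) =>
      exists_traceDom_le f hf (fun m => x m i) (hnb' i)
    set T : Finset (Fin k → Bb) := Finset.image w Finset.univ with hT
    have hTsub : ↑T ⊆ traceDom f := by
      intro v hv
      simp only [hT, Finset.coe_image, Finset.coe_univ, Set.image_univ,
        Set.mem_range] at hv
      obtain ⟨i, rfl⟩ := hv
      exact hw1 i
    have hTcoh : LinCoherent (↑T : Set (Fin k → Bb)) := by
      intro j hj v hv w' hw'
      have hall : ∀ i : Fin (b-1), w i j ≠ ⊥ := by
        intro i
        exact hj (w i) (by simp [hT])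
      have hrow : ∀ i : Fin (b-1), x j i = w i j := by
        intro i
        exact bLE_resolve (hw2 i j) (hall i)
      have hxnb : ∀ i : Fin (b-1), x j i ≠ ⊥ := fun i => (hrow i) ▸ hall i
      have := hx j
      simp only [PreseqSeg, Preseq, Set.mem_setOf_eq] at this
      rcases this with ⟨i, -, hbot⟩ | heq
      · exact absurd hbot (hxnb i)
      · simp only [hT, Finset.coe_image, Finset.coe_univ, Set.image_univ,
          Set.mem_range] at hv hw'
        obtain ⟨i, rfl⟩ := hv
        obtain ⟨i', rfl⟩ := hw'
        rw [← hrow i, ← hrow i']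
        exact heq i i' (by simp [Finset.mem_range, i.isLt]) (by simp [Finset.mem_range, i'.isLt])
    -- bivalued values among columns
    obtain ⟨ct, hct⟩ : ∃ c : Bool, f (fun m => x m i₀) = (c : Bb) := by
      rcases WithBot.ne_bot_iff_exists.mp (hnb' i₀) with ⟨c, hc⟩
      exact ⟨c, hc.symm⟩
    obtain ⟨cf, hcf⟩ : ∃ c : Bool, f (fun m => x m j₀) = (c : Bb) := by
      rcases WithBot.ne_bot_iff_exists.mp (hnb' j₀) with ⟨c, hc⟩
      exact ⟨c, hc.symm⟩
    have hctf : ct ≠ cf := by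
      intro h
      exact hij (by rw [hct, hcf, h])
    -- the two trace points with different values
    have hbiv : ∃ it jf : Fin (b-1), f (w it) = ((true : Bool) : Bb) ∧
        f (w jf) = ((false : Bool) : Bb) := by
      cases ct
      · cases cf
        · exact absurd rfl hctf
        · exact ⟨j₀, i₀, by rw [hw3 j₀, hcf], by rw [hw3 i₀, hct]⟩
      · cases cf
        · exact ⟨i₀, j₀, by rw [hw3 i₀, hct], by rw [hw3 j₀, hcf]⟩
        · exact absurd rfl hctf
    obtain ⟨it, jf, hit, hjf⟩ := hbiv
    have hmemT : ∀ i : Fin (b-1), w i ∈ T := fun i => by simp [hT]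
    have hwne : w it ≠ w jf := by
      intro h
      rw [h, hjf] at hit
      simp at hit
    rcases le_or_gt 3 T.card with h3 | h3
    · -- contradiction with minimality of b
      have hle := key_le T hTsub h3 hTcoh ⟨w it, hmemT it, hit⟩ ⟨w jf, hmemT jf, hjf⟩
      have hub : T.card ≤ b - 1 := by
        calc T.card ≤ (Finset.univ : Finset (Fin (b-1))).card := Finset.card_image_le
        _ = b - 1 := by simp
      omega
    · -- T = {w it, w jf}: build common upper bound, contradiction with monotonicity
      have hpair : ({w it, w jf} : Finset (Fin k → Bb)) = T := by
        apply Finset.eq_of_subset_of_card_le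
        · intro v hv
          simp only [Finset.mem_insert, Finset.mem_singleton] at hv
          rcases hv with rfl | rfl
          · exact hmemT it
          · exact hmemT jf
        · rw [Finset.card_pair hwne]; omega
      set z : Fin k → Bb := fun j => if w it j = ⊥ then w jf j else w it j with hz
      have hcohpair : ∀ j : Fin k, w it j ≠ ⊥ → w jf j ≠ ⊥ → w it j = w jf j := by
        intro j h1 h2
        apply hTcoh j _ (w it) (hmemT it) (w jf) (hmemT jf)
        intro v hv
        rw [← hpair] at hv
        simp only [Finset.coe_insert, Finset.coe_singleton, Set.mem_insert_iff,
          Set.mem_singleton_iff] at hv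
        rcases hv with rfl | rfl
        · exact h1
        · exact h2
      have hlet : tupLE (w it) z := by
        intro j
        by_cases h : w it j = ⊥
        · exact Or.inl h
        · exact Or.inr (by simp [hz, h])
      have hlef : tupLE (w jf) z := by
        intro j
        by_cases h : w jf j = ⊥
        · exact Or.inl h
        · right
          by_cases h' : w it j = ⊥
          · simp [hz, h']
          · simp [hz, h', hcohpair j h' h]
      have e1 : f z = ((true : Bool) : Bb) := by
        have := bLE_resolve (hf _ _ hlet) (by rw [hit]; simp)
        rw [this, hit]
      have e2 : f z = ((false : Bool) : Bb) := by
        have := bLE_resolve (hf _ _ hlef) (by rw [hjf]; simp)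
        rw [this, hjf]
      rw [e1] at e2
      simp at e2
  · -- not invariant under P^b_{b,b}
    intro hinv
    have hb0 : 0 < b := by omega
    set e := S.equivFin with he
    set g : Fin b → (Fin k → Bb) := fun i => (e.symm (Fin.cast hSb.symm i) : Fin k → Bb) with hg
    have hgS : ∀ i, g i ∈ S := fun i => (e.symm (Fin.cast hSb.symm i)).2
    have hgsurj : ∀ v ∈ S, ∃ i, g i = v := by
      intro v hv
      refine ⟨Fin.cast hSb (e ⟨v, hv⟩), ?_⟩
      simp [hg]
    set x : Fin k → Fin b → Bb := fun m i => g i m with hxdef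
    have hrows : ∀ m, x m ∈ PreseqSeg b b b := by
      intro m
      simp only [PreseqSeg, Preseq, Set.mem_setOf_eq]
      by_cases hbot : ∃ i : Fin b, g i m = ⊥
      · obtain ⟨i, hi⟩ := hbot
        exact Or.inl ⟨i, by simp [Finset.mem_range, i.isLt], hi⟩
      · push_neg at hbot
        right
        intro i j _ _
        have hallnb : ∀ v ∈ (↑S : Set (Fin k → Bb)), v m ≠ ⊥ := by
          intro v hv
          obtain ⟨i', rfl⟩ := hgsurj v hv
          exact hbot i'
        exact hScoh m hallnb (g i) (hgS i) (g j) (hgS j)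
    have hout := hinv x hrows
    simp only [PreseqSeg, Preseq, Set.mem_setOf_eq] at hout
    have hcol : ∀ i : Fin b, (fun m => x m i) = g i := fun i => rfl
    rcases hout with ⟨i, -, hbot⟩ | heq
    · rw [hcol i] at hbot
      exact (hSsub (hgS i)).1 hbot
    · obtain ⟨it, hitg⟩ := hgsurj vt hvtS
      obtain ⟨jf, hjfg⟩ := hgsurj vf hvfS
      have := heq it jf (by simp [Finset.mem_range, it.isLt]) (by simp [Finset.mem_range, jf.isLt])
      simp only [hcol] at this  -- not needed maybe
      have h1 : f (fun m => x m it) = ((true : Bool) : Bb) := by rw [hcol it, hitg]; exact hvt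
      have h2 : f (fun m => x m jf) = ((false : Bool) : Bb) := by rw [hcol jf, hjfg]; exact hvf
      rw [h1, h2] at this
      simp at this
end

section
/- A first-order monotone boolean function f of arity k is invariant under every presequentiality relation P^n_{A,B} (for all n ≥ 1 and all A ⊆ B ⊆ {1,…,n}) if and only if f is M-sequential. -/
section Aux

lemma mseq_invariant : ∀ {k : ℕ} (f : (Fin k → Bb) → Bb), MSeq f →
    ∀ (n : ℕ) (A B : Finset ℕ), A ⊆ B → Invariant f (Preseq n A B) := by
  intro k
  induction k with
  | zero =>
    intro f hf n A B _ x _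
    obtain ⟨b, hb⟩ := hf
    right
    intro i j _ _
    simp [hb]
  | succ k ih =>
    intro f hf n A B hAB x hx
    rcases hf with ⟨b, hb⟩ | ⟨i, hbot, hrec⟩
    · right; intro a b' _ _; simp [hb]
    · rcases hx i with ⟨j, hjA, hjbot⟩ | hconst
      · exact Or.inl ⟨j, hjA, hbot _ hjbot⟩
      · by_cases hB : ∃ j : Fin n, (j : ℕ) ∈ B
        · obtain ⟨j0, hj0⟩ := hB
          by_cases hxv : x i j0 = ⊥
          · right
            intro a b' haB hbB
            have ha : x i a = ⊥ := by rw [hconst a j0 haB hj0, hxv]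
            have hb' : x i b' = ⊥ := by rw [hconst b' j0 hbB hj0, hxv]
            show f (fun m => x m a) = f (fun m => x m b')
            rw [hbot _ ha, hbot _ hb']
          · obtain ⟨c, hc⟩ := WithBot.ne_bot_iff_exists.1 hxv
            have key := ih _ (hrec c) n A B hAB (fun m => x (i.succAbove m))
              (fun m => hx (i.succAbove m))
            have hcol : ∀ jj : Fin n, (jj : ℕ) ∈ B →
                f (i.insertNth (c : Bb) (fun m => x (i.succAbove m) jj))
                  = f (fun m => x m jj) := by
              intro jj hjj
              have hxc : x i jj = (c : Bb) := by rw [hconst jj j0 hjj hj0, ← hc]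
              conv_rhs => rw [← Fin.insertNth_self_removeNth i (fun m => x m jj)]
              rw [hxc]
              rfl
            rcases key with ⟨ja, hjaA, hja⟩ | hkc
            · refine Or.inl ⟨ja, hjaA, ?_⟩
              show f (fun m => x m ja) = ⊥
              rw [← hcol ja (hAB hjaA)]
              exact hja
            · right
              intro a b' haB hbB
              show f (fun m => x m a) = f (fun m => x m b')
              rw [← hcol a haB, ← hcol b' hbB]
              exact hkc a b' haB hbB
        · right
          intro a b' haB _
          exact absurd ⟨a, haB⟩ hB

lemma invariant_mseq : ∀ {k : ℕ} (f : (Fin k → Bb) → Bb),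
    (∀ n : ℕ, 1 ≤ n → ∀ A B : Finset ℕ, A ⊆ B → (∀ i ∈ B, i < n) →
      Invariant f (Preseq n A B)) → MSeq f := by
  intro k
  induction k with
  | zero =>
    intro f _
    exact ⟨f (fun i => i.elim0), fun x => by congr 1; exact Subsingleton.elim _ _⟩
  | succ k ih =>
    intro f h
    by_cases hc : ∃ b, ∀ x, f x = b
    · exact Or.inl hc
    · right
      push_neg at hc
      have hidx : ∃ i : Fin (k + 1), ∀ x, x i = ⊥ → f x = ⊥ := by
        by_contra hno
        push_neg at hno
        choose w hw1 hw2 using hno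
        obtain ⟨z, hz⟩ := hc (f (w 0))
        have hinv := h (k + 2) (by omega) (Finset.range (k + 1)) (Finset.range (k + 2))
          (Finset.range_subset_range.2 (by omega))
          (fun i hi => Finset.mem_range.1 hi)
        set X : Fin (k + 1) → Fin (k + 2) → Bb :=
          fun m jc => if hj : (jc : ℕ) < k + 1 then w ⟨jc, hj⟩ m else z m with hX
        have hrows : ∀ m, X m ∈ Preseq (k + 2) (Finset.range (k + 1)) (Finset.range (k + 2)) := by
          intro m
          left
          refine ⟨⟨(m : ℕ), by omega⟩, Finset.mem_range.2 m.isLt, ?_⟩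
          simp only [hX]
          rw [dif_pos (by simpa using m.isLt)]
          simpa using hw1 m
        have hout := hinv X hrows
        rcases hout with ⟨jc, hjcA, hjc⟩ | hall
        · have hlt : (jc : ℕ) < k + 1 := Finset.mem_range.1 hjcA
          have : (fun m => X m jc) = w ⟨jc, hlt⟩ := by
            funext m; simp only [hX]; rw [dif_pos hlt]
          have hjc' : f (fun m => X m jc) = ⊥ := hjc
          rw [this] at hjc'
          exact hw2 _ hjc'
        · have h1 := hall ⟨0, by omega⟩ ⟨k + 1, by omega⟩
            (Finset.mem_range.2 (by omega)) (Finset.mem_range.2 (by omega))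
          have e1 : (fun m => X m ⟨0, by omega⟩) = w 0 := by
            funext m; simp only [hX]; rw [dif_pos (by simp)]; simp
          have e2 : (fun m => X m ⟨k + 1, by omega⟩) = z := by
            funext m; simp only [hX]; rw [dif_neg (by simp)]
          have h1' : f (fun m => X m ⟨0, by omega⟩) = f (fun m => X m ⟨k + 1, by omega⟩) := h1
          rw [e1, e2] at h1'
          exact hz h1'.symm
      obtain ⟨i, hbot⟩ := hidx
      refine ⟨i, hbot, ?_⟩
      intro c
      apply ih
      intro n hn A B hAB hBn xt hxt
      set Y : Fin (k + 1) → Fin n → Bb :=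
        fun m' j =>
          (i.insertNth ((c : Bool) : Bb) (fun m => xt m j) : Fin (k + 1) → Bb) m' with hY
      have hrows : ∀ m' : Fin (k + 1), Y m' ∈ Preseq n A B := by
        intro m'
        rcases eq_or_ne m' i with rfl | hne
        · right
          intro a b' _ _
          simp [hY]
        · obtain ⟨m, rfl⟩ := Fin.exists_succAbove_eq hne
          have hYm : Y (i.succAbove m) = xt m := by
            funext j
            exact Fin.insertNth_apply_succAbove i _ _ m
          rw [hYm]
          exact hxt m
      have hres := h n hn A B hAB hBn Y hrows
      exact hres

end Aux

/-- `f` is invariant under every presequentiality relation iff `f` is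
M-sequential. -/
theorem stmt_14 {k : ℕ} (f : (Fin k → Bb) → Bb) (hf : FlatMono f) :
    (∀ n : ℕ, 1 ≤ n → ∀ A B : Finset ℕ, A ⊆ B → (∀ i ∈ B, i < n) →
      Invariant f (Preseq n A B)) ↔ MSeq f := by
  constructor
  · intro h
    exact invariant_mseq f h
  · intro h n hn A B hAB hBn
    exact mseq_invariant f h n A B hAB
end

section
/- For i ≥ 2, define por_i : 𝔹^i → 𝔹 by: por_i(x) = tt if at least i−1 coordinates of x equal tt; por_i(x) = ff if all i coordinates of x equal ff; and por_i(x) = ⊥ otherwise. Then por_i is monotone, cc(por_i) = 2, and bcc(por_i) = i + 1 (i.e. por_i has presequentiality level (i,1)). -/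
/-- The function `por i`: `tt` if at least `i - 1` coordinates are `tt`, `ff` if all
coordinates are `ff`, `⊥` otherwise. -/
def por (i : ℕ) : (Fin i → Bb) → Bb := fun x =>
  if i - 1 ≤ (Finset.univ.filter (fun c : Fin i => x c = ((true : Bool) : Bb))).card
  then ((true : Bool) : Bb)
  else if ∀ c, x c = ((false : Bool) : Bb) then ((false : Bool) : Bb)
  else ⊥

namespace Stmt16

def ee (i : ℕ) (j : Fin i) : Fin i → Bb := fun c => if c = j then ⊥ else ((true : Bool) : Bb)

def aff (i : ℕ) : Fin i → Bb := fun _ => ((false : Bool) : Bb)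

def cnt {i : ℕ} (x : Fin i → Bb) : ℕ :=
  (Finset.univ.filter (fun c => x c = ((true : Bool) : Bb))).card

lemma por_def {i : ℕ} (x : Fin i → Bb) :
    por i x = if i - 1 ≤ cnt x then ((true : Bool) : Bb)
      else if ∀ c, x c = ((false : Bool) : Bb) then ((false : Bool) : Bb) else ⊥ := rfl

lemma bb_cases (a : Bb) : a = ⊥ ∨ a = ((true : Bool) : Bb) ∨ a = ((false : Bool) : Bb) := by
  rcases a with _ | b
  · exact Or.inl rfl
  · cases b
    · exact Or.inr (Or.inr rfl)
    · exact Or.inr (Or.inl rfl)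

lemma tupLE_tt {i : ℕ} {x y : Fin i → Bb} (h : tupLE x y) {c : Fin i}
    (hc : x c = ((true : Bool) : Bb)) : y c = ((true : Bool) : Bb) := by
  rcases h c with h' | h'
  · rw [hc] at h'; exact absurd h' (by simp)
  · rw [← h', hc]

lemma cnt_mono {i : ℕ} {x y : Fin i → Bb} (h : tupLE x y) : cnt x ≤ cnt y := by
  apply Finset.card_le_card
  intro c hc
  simp only [Finset.mem_filter, Finset.mem_univ, true_and] at hc ⊢
  exact tupLE_tt h hc

lemma por_mono (i : ℕ) : FlatMono (por i) := by
  intro x y hxy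
  by_cases h1 : i - 1 ≤ cnt x
  · right
    rw [por_def, if_pos h1, por_def, if_pos (h1.trans (cnt_mono hxy))]
  · by_cases h2 : ∀ c, x c = ((false : Bool) : Bb)
    · have hxy' : x = y := funext fun c => by
        rcases hxy c with h | h
        · rw [h2 c] at h; exact absurd h (by simp)
        · exact h
      right; rw [hxy']
    · left; rw [por_def, if_neg h1, if_neg h2]

lemma cnt_ee {i : ℕ} (j : Fin i) : cnt (ee i j) = i - 1 := by
  have h : (Finset.univ.filter (fun c => ee i j c = ((true : Bool) : Bb)))
      = Finset.univ.erase j := by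
    ext c
    by_cases hc : c = j <;> simp [ee, hc]
  rw [cnt, h, Finset.card_erase_of_mem (Finset.mem_univ j), Finset.card_univ, Fintype.card_fin]

lemma por_ee {i : ℕ} (j : Fin i) : por i (ee i j) = ((true : Bool) : Bb) := by
  rw [por_def, if_pos (by rw [cnt_ee])]

lemma cnt_aff (i : ℕ) : cnt (aff i) = 0 := by
  simp [cnt, aff]

lemma por_aff {i : ℕ} (hi : 2 ≤ i) : por i (aff i) = ((false : Bool) : Bb) := by
  rw [por_def, if_neg (by rw [cnt_aff]; omega), if_pos (show ∀ c, aff i c = ((false : Bool) : Bb) from fun _ => rfl)]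

lemma tupLT_elim {i : ℕ} {v' v : Fin i → Bb} (h : tupLT v' v) :
    ∃ c, v' c = ⊥ ∧ v c ≠ ⊥ := by
  have h2 : ∃ c, v' c ≠ v c := by
    by_contra hc
    push_neg at hc
    exact h.2 (funext hc)
  obtain ⟨c, hc⟩ := h2
  rcases h.1 c with h' | h'
  · exact ⟨c, h', fun hb => hc (h'.trans hb.symm)⟩
  · exact absurd h' hc

lemma ee_mem {i : ℕ} (hi : 2 ≤ i) (j : Fin i) : ee i j ∈ traceDom (por i) := by
  constructor
  · rw [por_ee]; simp
  · intro v' hv'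
    obtain ⟨c₀, hc₀b, hc₀ne⟩ := tupLT_elim hv'
    have hc₀j : c₀ ≠ j := by
      intro h; subst h; exact hc₀ne (by simp [ee])
    have hsub : (Finset.univ.filter (fun c => v' c = ((true : Bool) : Bb)))
        ⊆ (Finset.univ.erase j).erase c₀ := by
      intro c hc
      simp only [Finset.mem_filter, Finset.mem_univ, true_and] at hc
      have hcj : v' c = ee i j c := by
        rcases hv'.1 c with h | h
        · rw [h] at hc; exact absurd hc (by simp)
        · exact h
      have h1 : c ≠ j := by
        intro h; subst h; rw [hcj] at hc; simp [ee] at hc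
      have h2 : c ≠ c₀ := by
        intro h; subst h; rw [hc₀b] at hc; simp at hc
      simp [Finset.mem_erase, h1, h2]
    have hcard : cnt v' ≤ i - 2 := by
      have := Finset.card_le_card hsub
      rw [Finset.card_erase_of_mem (by simp [Finset.mem_erase, hc₀j]),
        Finset.card_erase_of_mem (Finset.mem_univ j), Finset.card_univ, Fintype.card_fin] at this
      exact this
    have hbj : v' j = ⊥ := by
      rcases hv'.1 j with h | h
      · exact h
      · rw [h]; simp [ee]
    rw [por_def, if_neg (by omega), if_neg (fun h => by rw [h j] at hbj; simp at hbj)]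

lemma aff_mem {i : ℕ} (hi : 2 ≤ i) : aff i ∈ traceDom (por i) := by
  constructor
  · rw [por_aff hi]; simp
  · intro v' hv'
    obtain ⟨c₀, hc₀b, _⟩ := tupLT_elim hv'
    have hcnt : cnt v' = 0 := by
      rw [cnt, Finset.card_eq_zero, Finset.filter_eq_empty_iff]
      intro c _
      rcases hv'.1 c with h | h
      · rw [h]; simp
      · rw [h]; simp [aff]
    rw [por_def, if_neg (by omega), if_neg (fun h => by rw [h c₀] at hc₀b; simp at hc₀b)]

lemma tracechar {i : ℕ} (hi : 2 ≤ i) {v : Fin i → Bb} (hv : v ∈ traceDom (por i)) :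
    v = aff i ∨ ∃ j, v = ee i j := by
  obtain ⟨hne, hmin⟩ := hv
  by_cases h1 : i - 1 ≤ cnt v
  · right
    have hnoff : ∀ c, v c ≠ ((false : Bool) : Bb) := by
      intro c hc
      set v' := Function.update v c ⊥ with hv'def
      have hlt : tupLT v' v := by
        constructor
        · intro d
          by_cases hd : d = c
          · subst hd; left; simp [hv'def]
          · right; simp [hv'def, Function.update_of_ne hd]
        · intro he
          have := congrFun he c
          rw [hc] at this
          simp [hv'def] at this
      have hcnt : cnt v' = cnt v := by
        unfold cnt
        congr 1
        ext d
        by_cases hd : d = c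
        · subst hd; simp [hv'def, hc]
        · simp [hv'def, Function.update_of_ne hd]
      have := hmin v' hlt
      rw [por_def, hcnt, if_pos h1] at this
      simp at this
    have h1' : cnt v = i - 1 := by
      by_contra hne'
      have hgt : i - 1 < cnt v := lt_of_le_of_ne h1 (Ne.symm hne')
      have hpos : 0 < cnt v := by omega
      obtain ⟨c, hc⟩ := Finset.card_pos.mp hpos
      simp only [Finset.mem_filter, Finset.mem_univ, true_and] at hc
      set v' := Function.update v c ⊥ with hv'def
      have hlt : tupLT v' v := by
        constructor
        · intro d
          by_cases hd : d = c
          · subst hd; left; simp [hv'def]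
          · right; simp [hv'def, Function.update_of_ne hd]
        · intro he
          have := congrFun he c
          rw [hc] at this
          simp [hv'def] at this
      have hcnt : cnt v' = cnt v - 1 := by
        have hf : (Finset.univ.filter (fun d => v' d = ((true : Bool) : Bb)))
            = (Finset.univ.filter (fun d => v d = ((true : Bool) : Bb))).erase c := by
          ext d
          by_cases hd : d = c
          · subst hd; simp [hv'def]
          · simp [hv'def, Function.update_of_ne hd, Finset.mem_erase, hd]
        rw [cnt, hf, Finset.card_erase_of_mem (by simp [hc]), cnt]
      have := hmin v' hlt
      rw [por_def, hcnt, if_pos (by omega)] at this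
      simp at this
    have hpart : cnt v + (Finset.univ.filter (fun c => ¬ v c = ((true : Bool) : Bb))).card = i := by
      rw [cnt, Finset.card_filter_add_card_filter_not, Finset.card_univ, Fintype.card_fin]
    have hone : (Finset.univ.filter (fun c => ¬ v c = ((true : Bool) : Bb))).card = 1 := by omega
    obtain ⟨j, hj⟩ := Finset.card_eq_one.mp hone
    refine ⟨j, funext fun c => ?_⟩
    by_cases hc : c = j
    · subst hc
      have hcm : c ∈ Finset.univ.filter (fun c => ¬ v c = ((true : Bool) : Bb)) := by
        rw [hj]; exact Finset.mem_singleton_self c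
      simp only [Finset.mem_filter, Finset.mem_univ, true_and] at hcm
      rcases bb_cases (v c) with h | h | h
      · rw [h]; simp [ee]
      · exact absurd h hcm
      · exact absurd h (hnoff c)
    · have hcm : c ∉ Finset.univ.filter (fun c => ¬ v c = ((true : Bool) : Bb)) := by
        rw [hj]; simp [hc]
      simp only [Finset.mem_filter, Finset.mem_univ, true_and, not_not] at hcm
      rw [hcm]; simp [ee, hc]
  · left
    have h2 : ∀ c, v c = ((false : Bool) : Bb) := by
      by_contra h2
      rw [por_def, if_neg h1, if_neg h2] at hne
      exact hne rfl
    exact funext h2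

lemma ee_inj {i : ℕ} : Function.Injective (ee i) := by
  intro a b h
  by_contra hab
  have := congrFun h a
  simp [ee, hab] at this

lemma aff_ne_ee {i : ℕ} (j : Fin i) : aff i ≠ ee i j := by
  intro h
  have := congrFun h j
  simp [aff, ee] at this

end Stmt16

open Stmt16

/-- for `i ≥ 2`, `por i` is monotone, `cc (por i) = 2` and
`bcc (por i) = i + 1`. -/
theorem stmt_16 (i : ℕ) (hi : 2 ≤ i) :
    FlatMono (por i) ∧ cc (por i) = ((2 : ℕ) : ℕ∞) ∧
    bcc (por i) = ((i + 1 : ℕ) : ℕ∞) := by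
  refine ⟨por_mono i, ?_, ?_⟩
  · -- cc = 2
    apply le_antisymm
    · apply sInf_le
      set j0 : Fin i := ⟨0, by omega⟩
      set j1 : Fin i := ⟨1, by omega⟩
      have hne : ee i j0 ≠ ee i j1 := fun h => by
        have := ee_inj h
        simp [j0, j1, Fin.ext_iff] at this
      refine ⟨{ee i j0, ee i j1}, ?_, ?_, ?_, ?_⟩
      · intro v hv
        simp only [Finset.coe_insert, Finset.coe_singleton, Set.mem_insert_iff,
          Set.mem_singleton_iff] at hv
        rcases hv with h | h <;> (subst h; exact ee_mem hi _)
      · rw [Finset.card_pair hne]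
      · intro j hj v hv w hw
        have hj0 : j ≠ j0 := by
          intro h
          exact hj (ee i j0) (by simp) (by simp [ee, h])
        have hj1 : j ≠ j1 := by
          intro h
          exact hj (ee i j1) (by simp) (by simp [ee, h])
        simp only [Finset.coe_insert, Finset.coe_singleton, Set.mem_insert_iff,
          Set.mem_singleton_iff] at hv hw
        rcases hv with h | h <;> rcases hw with h' | h' <;>
          (subst h; subst h'; simp [ee, hj0, hj1])
      · rw [Finset.card_pair hne]
    · apply le_sInf
      rintro c ⟨S, -, hcard, -, rfl⟩
      exact_mod_cast hcard
  · -- bcc = i + 1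
    set T : Finset (Fin i → Bb) := insert (aff i) (Finset.image (ee i) Finset.univ) with hT
    have haffnot : aff i ∉ Finset.image (ee i) Finset.univ := by
      simp only [Finset.mem_image, Finset.mem_univ, true_and, not_exists]
      exact fun j h => aff_ne_ee j h.symm
    have hTcard : T.card = i + 1 := by
      rw [hT, Finset.card_insert_of_notMem haffnot,
        Finset.card_image_of_injective _ ee_inj, Finset.card_univ, Fintype.card_fin]
    apply le_antisymm
    · apply sInf_le
      refine ⟨T, ?_, by omega, ?_, ?_, ?_, by rw [hTcard]⟩
      · intro v hv
        simp only [hT, Finset.coe_insert, Set.mem_insert_iff, Finset.coe_image,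
          Set.mem_image, Finset.mem_coe] at hv
        rcases hv with h | ⟨j, _, h⟩
        · subst h; exact aff_mem hi
        · subst h; exact ee_mem hi _
      · intro j hj
        exfalso
        refine hj (ee i j) ?_ (by simp [ee])
        simp [hT]
      · exact ⟨ee i ⟨0, by omega⟩, by simp [hT], por_ee _⟩
      · exact ⟨aff i, by simp [hT], por_aff hi⟩
    · apply le_sInf
      rintro c ⟨S, hsub, hcard3, hcoh, ⟨vt, hvt, hvtval⟩, ⟨vf, hvf, hvfval⟩, rfl⟩
      have hvf_eq : vf = aff i := by
        rcases tracechar hi (hsub (Finset.mem_coe.mpr hvf)) with h | ⟨j, hj⟩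
        · exact h
        · rw [hj, por_ee] at hvfval
          simp at hvfval
      have hvt_ee : ∃ j, vt = ee i j := by
        rcases tracechar hi (hsub (Finset.mem_coe.mpr hvt)) with h | h
        · rw [h, por_aff hi] at hvtval
          simp at hvtval
        · exact h
      have hall : ∀ j, ee i j ∈ S := by
        intro j
        by_contra hnot
        have hbot : ∀ v ∈ (↑S : Set (Fin i → Bb)), v j ≠ ⊥ := by
          intro v hv hbotv
          rcases tracechar hi (hsub hv) with h | ⟨k, hk⟩
          · subst h; simp [aff] at hbotv
          · subst hk
            have hjk : j = k := by
              by_contra hne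
              simp [ee, hne] at hbotv
            exact hnot (hjk ▸ Finset.mem_coe.mp hv)
        obtain ⟨k, hk⟩ := hvt_ee
        have heq := hcoh j hbot vt (Finset.mem_coe.mpr hvt) vf (Finset.mem_coe.mpr hvf)
        rw [hk, hvf_eq] at heq
        have hjk : j ≠ k := fun h => hnot (h ▸ hk ▸ hvt)
        simp [ee, aff, hjk] at heq
      have hsub2 : T ⊆ S := by
        intro v hv
        simp only [hT, Finset.mem_insert, Finset.mem_image, Finset.mem_univ, true_and] at hv
        rcases hv with h | ⟨j, h⟩
        · subst h; exact hvf_eq ▸ hvf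
        · subst h; exact hall j
      have : i + 1 ≤ S.card := hTcard ▸ Finset.card_le_card hsub2
      exact_mod_cast this
end
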